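/- In Z⁷ with orthonormal basis η₀,...,η₆, let L⁰ be the orthogonal complement (in Z⁷) of the subgroup P generated by η₀+η₃+η₄+η₅, η₁+η₃+η₄+η₆, η₂+η₃+η₅+η₆. Then up to sign, the elements of L⁰ of squared norm 3 are exactly: η₀+η₁−η₄, η₀+η₂−η₅, η₀−η₃+η₆, η₁+η₂−η₆, η₁−η₃+η₅, η₂−η₃+η₄. -/

import Mathlib

/-- The standard inner product on `ℤ⁷`. -/
def dot (x y : Fin 7 → ℤ) : ℤ := ∑ i, x i * y i

/-- The orthonormal basis `η₀, …, η₆` of `ℤ⁷`. -/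
def eta (i : Fin 7) : Fin 7 → ℤ := Pi.single i 1

/-- Characters of the three projective indecomposable modules. -/
def p0 : Fin 7 → ℤ := eta 0 + eta 3 + eta 4 + eta 5
def p1 : Fin 7 → ℤ := eta 1 + eta 3 + eta 4 + eta 6
def p2 : Fin 7 → ℤ := eta 2 + eta 3 + eta 5 + eta 6

/-- The subgroup `P` of `ℤ⁷` generated by `p₀, p₁, p₂`. -/
def P : Submodule ℤ (Fin 7 → ℤ) := Submodule.span ℤ {p0, p1, p2}

lemma dot_add' (x a b : Fin 7 → ℤ) : dot x (a + b) = dot x a + dot x b := by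
  simp [dot, mul_add, Finset.sum_add_distrib]

lemma dot_smul' (x a : Fin 7 → ℤ) (c : ℤ) : dot x (c • a) = c * dot x a := by
  simp only [dot, Finset.mul_sum, Pi.smul_apply, smul_eq_mul]
  exact Finset.sum_congr rfl fun i _ => by ring

lemma mem_P_dot (x : Fin 7 → ℤ) (h0 : dot x p0 = 0) (h1 : dot x p1 = 0) (h2 : dot x p2 = 0) :
    ∀ p ∈ P, dot x p = 0 := by
  intro p hp
  induction hp using Submodule.span_induction with
  | mem p hp => rcases hp with rfl | rfl | rfl <;> assumption
  | zero => simp [dot]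
  | add a b _ _ ha hb => rw [dot_add', ha, hb]; ring
  | smul c a _ ha => rw [dot_smul', ha]; ring

lemma ext7 (y z : Fin 7 → ℤ) :
    y = z ↔ (y 0 = z 0 ∧ y 1 = z 1 ∧ y 2 = z 2 ∧ y 3 = z 3 ∧ y 4 = z 4 ∧ y 5 = z 5 ∧ y 6 = z 6) := by
  constructor
  · rintro rfl; simp
  · rintro ⟨q0, q1, q2, q3, q4, q5, q6⟩; funext i; fin_cases i <;> assumption

set_option maxHeartbeats 2000000 in
/-- Up to sign, the elements of `L⁰ = P^⊥` of squared norm 3 are exactly the six listed ones. -/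
theorem stmt_5 (x : Fin 7 → ℤ) :
    ((∀ p ∈ P, dot x p = 0) ∧ dot x x = 3) ↔
      (x ∈ ({eta 0 + eta 1 - eta 4, eta 0 + eta 2 - eta 5, eta 0 - eta 3 + eta 6,
             eta 1 + eta 2 - eta 6, eta 1 - eta 3 + eta 5, eta 2 - eta 3 + eta 4} :
             Set (Fin 7 → ℤ)) ∨
       -x ∈ ({eta 0 + eta 1 - eta 4, eta 0 + eta 2 - eta 5, eta 0 - eta 3 + eta 6,
             eta 1 + eta 2 - eta 6, eta 1 - eta 3 + eta 5, eta 2 - eta 3 + eta 4} :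
             Set (Fin 7 → ℤ))) := by
  constructor
  · rintro ⟨horth, hnorm⟩
    have h0 := horth p0 (Submodule.subset_span (by simp))
    have h1 := horth p1 (Submodule.subset_span (by simp))
    have h2 := horth p2 (Submodule.subset_span (by simp))
    simp only [dot, p0, p1, p2, eta, Fin.sum_univ_seven, Pi.single_apply, Fin.reduceEq, reduceIte,
      Pi.add_apply, Pi.sub_apply] at h0 h1 h2 hnorm
    norm_num at h0 h1 h2
    simp only [Set.mem_insert_iff, Set.mem_singleton_iff, ext7, Pi.add_apply, Pi.sub_apply,
      Pi.neg_apply, eta, Pi.single_apply, Fin.reduceEq, reduceIte]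
    norm_num
    set a := x 0; set b := x 1; set c := x 2; set d := x 3; set e := x 4; set f := x 5; set g := x 6
    clear_value a b c d e f g
    have nn := fun (v : ℤ) => mul_self_nonneg v
    have bb1 : -1 ≤ b := by nlinarith [nn a, nn c, nn d, nn e, nn f, nn g]
    have bb2 : b ≤ 1 := by nlinarith [nn a, nn c, nn d, nn e, nn f, nn g]
    have bd1 : -1 ≤ d := by nlinarith [nn a, nn b, nn c, nn e, nn f, nn g]
    have bd2 : d ≤ 1 := by nlinarith [nn a, nn b, nn c, nn e, nn f, nn g]
    have be1 : -1 ≤ e := by nlinarith [nn a, nn b, nn c, nn d, nn f, nn g]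
    have be2 : e ≤ 1 := by nlinarith [nn a, nn b, nn c, nn d, nn f, nn g]
    have bf1 : -1 ≤ f := by nlinarith [nn a, nn b, nn c, nn d, nn e, nn g]
    have bf2 : f ≤ 1 := by nlinarith [nn a, nn b, nn c, nn d, nn e, nn g]
    have ea : a = -(d + e + f) := by omega
    have eg : g = -(b + d + e) := by omega
    have ec : c = b + e - f := by omega
    subst ea eg ec
    rcases (show b = -1 ∨ b = 0 ∨ b = 1 by omega) with rfl | rfl | rfl <;>
      rcases (show d = -1 ∨ d = 0 ∨ d = 1 by omega) with rfl | rfl | rfl <;>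
        rcases (show e = -1 ∨ e = 0 ∨ e = 1 by omega) with rfl | rfl | rfl <;>
          rcases (show f = -1 ∨ f = 0 ∨ f = 1 by omega) with rfl | rfl | rfl <;>
            (revert hnorm; norm_num)
  · intro h
    have key : ∀ y ∈ ({eta 0 + eta 1 - eta 4, eta 0 + eta 2 - eta 5, eta 0 - eta 3 + eta 6,
             eta 1 + eta 2 - eta 6, eta 1 - eta 3 + eta 5, eta 2 - eta 3 + eta 4} :
             Set (Fin 7 → ℤ)),
        (dot y p0 = 0 ∧ dot y p1 = 0 ∧ dot y p2 = 0 ∧ dot y y = 3) := by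
      intro y hy
      rcases hy with rfl | rfl | rfl | rfl | rfl | rfl <;>
        refine ⟨?_, ?_, ?_, ?_⟩ <;>
        simp [dot, p0, p1, p2, eta, Fin.sum_univ_seven, Pi.single_apply]
    rcases h with h | h
    · obtain ⟨k0, k1, k2, k3⟩ := key x h
      exact ⟨mem_P_dot x k0 k1 k2, k3⟩
    · obtain ⟨k0, k1, k2, k3⟩ := key (-x) h
      have dn : ∀ y, dot (-x) y = - dot x y := fun y => by
        simp [dot, neg_mul, Finset.sum_neg_distrib]
      rw [dn] at k0 k1 k2
      have k3' : dot x x = 3 := by simpa [dot, neg_mul_neg] using k3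
      exact ⟨mem_P_dot x (by omega) (by omega) (by omega), k3'⟩
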